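/- Every element S of S = S1 ∪ S2 ∪ S3 ∪ S4 falls into exactly one of the following mutually exclusive cases: (i) S is supported only on basis vectors E_{I,J} with I ⊇ {m+1,…,m+r} (positions corresponding to G); (ii) S is supported only on basis vectors E_{I,J} with I ⊉ {m+1,…,m+r} (positions corresponding to F∖G); (iii) S falls into neither case (i) nor case (ii), and some coefficient of S at a basis vector E_{I,J} with I ⊉ {m+1,…,m+r} involves a variable c_{ij} (i.e., that coefficient does not lie in the subring generated by the y-variables). -/
import Mathlib


open MvPolynomial

namespace SM

/-- Variables of the ring `R`: `y`-variables indexed by `Fin m × Fin n` (inl)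
and `c`-variables indexed by `Fin r × Fin n` (inr). -/
abbrev Vars (m r n : ℕ) := (Fin m × Fin n) ⊕ (Fin r × Fin n)

/-- Variables of the ring `P`: `x`-variables indexed by `Fin K` (inl)
and `c`-variables indexed by `Fin r × Fin n` (inr). -/
abbrev XVars (K r n : ℕ) := Fin K ⊕ (Fin r × Fin n)

/-- The free module with basis indexed by pairs of finsets of rows and columns. -/
abbrev FreeMod (S : Type*) (a b : ℕ) := Finset (Fin a) × Finset (Fin b) → S

/-- The `(m+r) × n` matrix `D` obtained by stacking `Y = (y_{kj})` on top of `C = (c_{ij})`. -/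
noncomputable def Dmat (𝕂 : Type*) [Field 𝕂] (m r n : ℕ) :
    Matrix (Fin (m + r)) (Fin n) (MvPolynomial (Vars m r n) 𝕂) :=
  Matrix.of fun i j =>
    if h : (i : ℕ) < m then X (Sum.inl (⟨i, h⟩, j))
    else X (Sum.inr (⟨(i : ℕ) - m, by have := i.isLt; omega⟩, j))

/-- The minor of `A` on the rows `I` and columns `J`, when both have cardinality `k`
(and `0` otherwise). -/
noncomputable def minorOf {S : Type*} [CommRing S] {a b : ℕ} (k : ℕ)
    (A : Matrix (Fin a) (Fin b) S) (I : Finset (Fin a)) (J : Finset (Fin b)) : S :=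
  if h : I.card = k ∧ J.card = k then
    (Matrix.of fun s t : Fin k =>
      A ((I.orderIsoOfFin h.1 s : Fin a)) ((J.orderIsoOfFin h.2 t : Fin b))).det
  else 0

/-- The map `φ` sending `E_{I,J} ↦ |A_{I,J}|`. -/
noncomputable def phiMap {S : Type*} [CommRing S] {a b : ℕ} (k : ℕ)
    (A : Matrix (Fin a) (Fin b) S) (T : FreeMod S a b) : S :=
  ∑ p : Finset (Fin a) × Finset (Fin b), T p * minorOf k A p.1 p.2


/-- The standard basis vector `E_{I,J}` of the free module. -/
noncomputable def eVec {S : Type*} [CommRing S] {a b : ℕ}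
    (p : Finset (Fin a) × Finset (Fin b)) : FreeMod S a b := Pi.single p 1

/-- The set `{m+1, …, m+r}` of the last `r` row indices. -/
def lastRows (m r : ℕ) : Finset (Fin (m + r)) := Finset.univ.filter fun i => m ≤ (i : ℕ)

/-- The set `{1, …, m}` of the first `m` row indices. -/
def firstRows (m r : ℕ) : Finset (Fin (m + r)) := Finset.univ.filter fun i => (i : ℕ) < m

/-- The Laplace expansion, along the repeated row, of the determinant of the
`(r+2) × (r+2)` matrix obtained from `A_{I,J}` (with `|J| = r+2`) by adding an extra copy of
row `i`, viewed as an element of the free module: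
`∑_t (-1)^t d_{i, j_t} E_{I, J \ {j_t}}`. -/
noncomputable def s1El {S : Type*} [CommRing S] {a b : ℕ} (r : ℕ)
    (A : Matrix (Fin a) (Fin b) S) (i : Fin a) (I : Finset (Fin a)) (J : Finset (Fin b))
    (hJ : J.card = r + 2) : FreeMod S a b :=
  ∑ t : Fin (r + 2),
    ((-1 : S) ^ (t : ℕ) * A i (J.orderIsoOfFin hJ t)) •
      eVec (I, J.erase (J.orderIsoOfFin hJ t))

/-- The column analogue of `s1El`: the Laplace expansion, along the repeated column, of the
determinant of the matrix obtained from `A_{I,J}` (with `|I| = r+2`) by adding an extra copy of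
column `j`. -/
noncomputable def s2El {S : Type*} [CommRing S] {a b : ℕ} (r : ℕ)
    (A : Matrix (Fin a) (Fin b) S) (j : Fin b) (I : Finset (Fin a)) (J : Finset (Fin b))
    (hI : I.card = r + 2) : FreeMod S a b :=
  ∑ s : Fin (r + 2),
    ((-1 : S) ^ (s : ℕ) * A ((I.orderIsoOfFin hI s : Fin a)) j) •
      eVec (I.erase (I.orderIsoOfFin hI s), J)

/-- The Laplace expansion of `|A_{I,J}|` (with `|I| = |J| = r+2`) along its `p`-th row
(`0`-indexed), with the usual cofactor signs, viewed as an element of the free module. -/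
noncomputable def rowExp {S : Type*} [CommRing S] {a b : ℕ} (r : ℕ)
    (A : Matrix (Fin a) (Fin b) S) (I : Finset (Fin a)) (J : Finset (Fin b))
    (hI : I.card = r + 2) (hJ : J.card = r + 2) (p : Fin (r + 2)) : FreeMod S a b :=
  ∑ t : Fin (r + 2),
    ((-1 : S) ^ ((p : ℕ) + (t : ℕ)) *
        A ((I.orderIsoOfFin hI p : Fin a)) ((J.orderIsoOfFin hJ t : Fin b))) •
      eVec (I.erase (I.orderIsoOfFin hI p), J.erase (J.orderIsoOfFin hJ t))

/-- The Laplace expansion of `|A_{I,J}|` (with `|I| = |J| = r+2`) along its `q`-th column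
(`0`-indexed), with the usual cofactor signs, viewed as an element of the free module. -/
noncomputable def colExp {S : Type*} [CommRing S] {a b : ℕ} (r : ℕ)
    (A : Matrix (Fin a) (Fin b) S) (I : Finset (Fin a)) (J : Finset (Fin b))
    (hI : I.card = r + 2) (hJ : J.card = r + 2) (q : Fin (r + 2)) : FreeMod S a b :=
  ∑ s : Fin (r + 2),
    ((-1 : S) ^ ((s : ℕ) + (q : ℕ)) *
        A ((I.orderIsoOfFin hI s : Fin a)) ((J.orderIsoOfFin hJ q : Fin b))) •
      eVec (I.erase (I.orderIsoOfFin hI s), J.erase (J.orderIsoOfFin hJ q))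

/-- Kurano's Type I row syzygies `S1`. -/
def S1Set {S : Type*} [CommRing S] {a b : ℕ} (r : ℕ) (A : Matrix (Fin a) (Fin b) S) :
    Set (FreeMod S a b) :=
  {T | ∃ (I : Finset (Fin a)) (J : Finset (Fin b)) (_ : I.card = r + 1) (hJ : J.card = r + 2)
    (i : Fin a), i ∈ I ∧ T = s1El r A i I J hJ}

/-- Kurano's Type I column syzygies `S2`. -/
def S2Set {S : Type*} [CommRing S] {a b : ℕ} (r : ℕ) (A : Matrix (Fin a) (Fin b) S) :
    Set (FreeMod S a b) :=
  {T | ∃ (I : Finset (Fin a)) (J : Finset (Fin b)) (hI : I.card = r + 2) (_ : J.card = r + 1)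
    (j : Fin b), j ∈ J ∧ T = s2El r A j I J hI}

/-- The syzygies `S3`: differences of the Laplace expansions of `|A_{I,J}|` along its first row
and along its `h`-th row, `h ≥ 2` (here `0`-indexed, so `h ≥ 1`). -/
def S3Set {S : Type*} [CommRing S] {a b : ℕ} (r : ℕ) (A : Matrix (Fin a) (Fin b) S) :
    Set (FreeMod S a b) :=
  {T | ∃ (I : Finset (Fin a)) (J : Finset (Fin b)) (hI : I.card = r + 2) (hJ : J.card = r + 2)
    (h : Fin (r + 2)), 1 ≤ (h : ℕ) ∧ T = rowExp r A I J hI hJ 0 - rowExp r A I J hI hJ h}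

/-- The syzygies `S4`: differences of the Laplace expansions of `|A_{I,J}|` along its first row
and along its `k`-th column, `k ≥ 2` (here `0`-indexed, so `k ≥ 1`). -/
def S4Set {S : Type*} [CommRing S] {a b : ℕ} (r : ℕ) (A : Matrix (Fin a) (Fin b) S) :
    Set (FreeMod S a b) :=
  {T | ∃ (I : Finset (Fin a)) (J : Finset (Fin b)) (hI : I.card = r + 2) (hJ : J.card = r + 2)
    (k : Fin (r + 2)), 1 ≤ (k : ℕ) ∧ T = rowExp r A I J hI hJ 0 - colExp r A I J hI hJ k}

/-- The set `S'_1`: for `h ∈ {1,…,m}`, `I = {h} ∪ {m+1,…,m+r}` and `|J| = r+2`, the Laplace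
expansion along the repeated row `h`. -/
def S1'Set (𝕂 : Type*) [Field 𝕂] (m r n : ℕ) :
    Set (FreeMod (MvPolynomial (Vars m r n) 𝕂) (m + r) n) :=
  {T | ∃ (i : Fin (m + r)) (J : Finset (Fin n)) (hJ : J.card = r + 2),
    (i : ℕ) < m ∧ T = s1El r (Dmat 𝕂 m r n) i (insert i (lastRows m r)) J hJ}

/-- The set `S'_3`: for `|I| = |J| = r+2` with `|I ∩ {1,…,m}| = 2`, the difference of the Laplace
expansions of `|D_{I,J}|` along its two rows with index in `{1,…,m}` (which are the two smallest
rows of `I`, i.e. positions `0` and `1`). -/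
def S3'Set (𝕂 : Type*) [Field 𝕂] (m r n : ℕ) :
    Set (FreeMod (MvPolynomial (Vars m r n) 𝕂) (m + r) n) :=
  {T | ∃ (I : Finset (Fin (m + r))) (J : Finset (Fin n)) (hI : I.card = r + 2)
    (hJ : J.card = r + 2), (I ∩ firstRows m r).card = 2 ∧
    T = rowExp r (Dmat 𝕂 m r n) I J hI hJ 0 - rowExp r (Dmat 𝕂 m r n) I J hI hJ 1}

/-- The `(m+r) × n` matrix obtained by stacking `M_x = ∑ x_ℓ M_ℓ` on top of `C`. -/
noncomputable def MxC (𝕂 : Type*) [Field 𝕂] (m r n K : ℕ)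
    (M : Fin K → Matrix (Fin m) (Fin n) 𝕂) :
    Matrix (Fin (m + r)) (Fin n) (MvPolynomial (XVars K r n) 𝕂) :=
  Matrix.of fun i j =>
    if h : (i : ℕ) < m then ∑ ℓ, C (M ℓ ⟨i, h⟩ j) * X (Sum.inl ℓ)
    else X (Sum.inr (⟨(i : ℕ) - m, by have := i.isLt; omega⟩, j))

/-- The specialization homomorphism `ρ : R → P`, `y_{kj} ↦ m_{kj}(x)`, `c_{ij} ↦ c_{ij}`. -/
noncomputable def rho (𝕂 : Type*) [Field 𝕂] (m r n K : ℕ)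
    (M : Fin K → Matrix (Fin m) (Fin n) 𝕂) :
    MvPolynomial (Vars m r n) 𝕂 →ₐ[𝕂] MvPolynomial (XVars K r n) 𝕂 :=
  aeval fun v => match v with
    | Sum.inl (k, j) => ∑ ℓ, C (M ℓ k j) * X (Sum.inl ℓ)
    | Sum.inr (i, j) => X (Sum.inr (i, j))

end SM

open SM

section Helpers

variable {S : Type*} [CommRing S] {a b N : ℕ}

lemma sum_smul_eVec_apply (c : Fin N → S)
    (pos : Fin N → Finset (Fin a) × Finset (Fin b)) (p : Finset (Fin a) × Finset (Fin b)) :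
    (∑ t, c t • (eVec (pos t) : FreeMod S a b)) p = ∑ t, if p = pos t then c t else 0 := by
  simp [eVec, Finset.sum_apply, Pi.single_apply]

lemma ite_sum_self {ι : Type*} [DecidableEq ι] (c : Fin N → S) (pos : Fin N → ι)
    (inj : Function.Injective pos) (t₀ : Fin N) :
    (∑ t, if pos t₀ = pos t then c t else 0) = c t₀ := by
  rw [Finset.sum_eq_single t₀]
  · simp
  · exact fun t _ ht => if_neg fun h => ht ((inj h).symm)
  · simp

lemma ite_sum_zero {ι : Type*} [DecidableEq ι] (c : Fin N → S) (pos : Fin N → ι) {p : ι}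
    (h : ∀ t, p ≠ pos t) : (∑ t, if p = pos t then c t else 0) = 0 :=
  Finset.sum_eq_zero fun t _ => if_neg (h t)

lemma erase_iso_eq {c : ℕ} (J : Finset (Fin c)) {k : ℕ} (hJ : J.card = k)
    {t t' : Fin k} (h : J.erase (J.orderIsoOfFin hJ t) = J.erase (J.orderIsoOfFin hJ t')) :
    t = t' :=
  (J.orderIsoOfFin hJ).injective
    (Subtype.ext ((Finset.erase_inj J (J.orderIsoOfFin hJ t).2).mp h))

variable {m r n : ℕ}

lemma mem_lastRows (i : Fin (m + r)) : i ∈ lastRows m r ↔ m ≤ (i : ℕ) := by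
  simp [lastRows]

lemma lastRows_card (m r : ℕ) : (lastRows m r).card = r := by
  have h : lastRows m r =
      Finset.image (fun i : Fin r => (⟨m + i, by omega⟩ : Fin (m + r))) Finset.univ := by
    ext x
    simp only [mem_lastRows, Finset.mem_image, Finset.mem_univ, true_and]
    constructor
    · intro hx
      exact ⟨⟨(x : ℕ) - m, by omega⟩, by ext; simp; omega⟩
    · rintro ⟨i, rfl⟩; simp
  rw [h, Finset.card_image_of_injective _ (fun i j hij => by
    simp only [Fin.mk.injEq, Fin.ext_iff] at hij ⊢; omega),
    Finset.card_univ, Fintype.card_fin]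

lemma exists_lt_of_card (I : Finset (Fin (m + r))) (h : r < I.card) :
    ∃ x ∈ I, (x : ℕ) < m := by
  by_contra hc
  push_neg at hc
  have hsub : I ⊆ lastRows m r := fun x hx => (mem_lastRows x).mpr (hc x hx)
  have := Finset.card_le_card hsub
  rw [lastRows_card] at this
  omega

lemma iso_zero_lt (I : Finset (Fin (m + r))) (hI : I.card = r + 2) :
    ((I.orderIsoOfFin hI 0 : Fin (m + r)) : ℕ) < m := by
  obtain ⟨x, hx, hxm⟩ := exists_lt_of_card I (by omega)
  have hs : ((I.orderIsoOfFin hI ((I.orderIsoOfFin hI).symm ⟨x, hx⟩) : Fin (m + r))) = x := by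
    simp
  have hle : I.orderIsoOfFin hI 0 ≤ I.orderIsoOfFin hI ((I.orderIsoOfFin hI).symm ⟨x, hx⟩) :=
    (I.orderIsoOfFin hI).monotone (Fin.zero_le _)
  have : ((I.orderIsoOfFin hI 0 : Fin (m + r)) : ℕ) ≤ (x : ℕ) := by
    rw [← hs]; exact hle
  omega

lemma exists_iso_ge (hr : 0 < r) (I : Finset (Fin (m + r))) (hI : I.card = r + 2)
    (hsub : lastRows m r ⊆ I) :
    ∃ s : Fin (r + 2), s ≠ 0 ∧ m ≤ ((I.orderIsoOfFin hI s : Fin (m + r)) : ℕ) := by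
  have hx : (⟨m, by omega⟩ : Fin (m + r)) ∈ I :=
    hsub ((mem_lastRows _).mpr (by simp))
  refine ⟨(I.orderIsoOfFin hI).symm ⟨_, hx⟩, ?_, ?_⟩
  · intro h0
    have h1 : ((I.orderIsoOfFin hI ((I.orderIsoOfFin hI).symm ⟨_, hx⟩) : Fin (m + r)) : ℕ) = m := by
      simp
    rw [h0] at h1
    have := iso_zero_lt I hI
    omega
  · have h1 : ((I.orderIsoOfFin hI ((I.orderIsoOfFin hI).symm ⟨_, hx⟩) : Fin (m + r)) : ℕ) = m := by
      simp
    omega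

variable {𝕂 : Type*} [Field 𝕂]

lemma X_inr_not_supported (v : Fin r × Fin n) :
    (X (Sum.inr v) : MvPolynomial (Vars m r n) 𝕂) ∉ supported 𝕂 (Set.range Sum.inl) := by
  rw [X_mem_supported]
  rintro ⟨w, hw⟩
  exact Sum.inl_ne_inr hw

lemma neg_one_pow_mul_mem_supported_iff {σ : Type*} (s : Set σ) (k : ℕ)
    (x : MvPolynomial σ 𝕂) :
    ((-1 : MvPolynomial σ 𝕂) ^ k * x ∈ supported 𝕂 s) ↔ x ∈ supported 𝕂 s := by
  have hmem : ((-1 : MvPolynomial σ 𝕂) ^ k) ∈ supported 𝕂 s :=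
    pow_mem (neg_mem (one_mem _)) k
  constructor
  · intro h
    have h2 := mul_mem hmem h
    rwa [← mul_assoc, ← pow_add, Even.neg_one_pow ⟨k, rfl⟩, one_mul] at h2
  · exact fun h => mul_mem hmem h

lemma Dmat_apply_of_ge {i : Fin (m + r)} (h : m ≤ (i : ℕ)) (j : Fin n) :
    Dmat 𝕂 m r n i j =
      X (Sum.inr (⟨(i : ℕ) - m, by have := i.isLt; omega⟩, j)) := by
  rw [Dmat]
  simp [Matrix.of_apply, Nat.not_lt.mpr h]

lemma Dmat_ne_zero (i : Fin (m + r)) (j : Fin n) : Dmat 𝕂 m r n i j ≠ 0 := by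
  rw [Dmat]
  dsimp only [Matrix.of_apply]
  split <;> exact X_ne_zero _

lemma sign_Dmat_ne_zero (k : ℕ) (i : Fin (m + r)) (j : Fin n) :
    (-1 : MvPolynomial (Vars m r n) 𝕂) ^ k * Dmat 𝕂 m r n i j ≠ 0 :=
  mul_ne_zero (pow_ne_zero _ (neg_ne_zero.mpr one_ne_zero)) (Dmat_ne_zero i j)

lemma sign_Dmat_not_supported {i : Fin (m + r)} (h : m ≤ (i : ℕ)) (j : Fin n) (k : ℕ) :
    (-1 : MvPolynomial (Vars m r n) 𝕂) ^ k * Dmat 𝕂 m r n i j ∉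
      supported 𝕂 (Set.range Sum.inl) := by
  intro hc
  rw [neg_one_pow_mul_mem_supported_iff, Dmat_apply_of_ge h] at hc
  exact X_inr_not_supported _ hc

lemma not_subset_erase_of_mem {x : Fin (m + r)} (hx : m ≤ (x : ℕ))
    (I : Finset (Fin (m + r))) : ¬ lastRows m r ⊆ I.erase x := fun h =>
  Finset.notMem_erase x I (h ((mem_lastRows x).mpr hx))

lemma subset_erase_of {x : Fin (m + r)} {I : Finset (Fin (m + r))}
    (hIc : lastRows m r ⊆ I) (hx : (x : ℕ) < m) : lastRows m r ⊆ I.erase x :=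
  Finset.subset_erase.mpr ⟨hIc, fun hmem => by
    have := (mem_lastRows x).mp hmem; omega⟩

lemma not_subset_of_erase {x : Fin (m + r)} {I : Finset (Fin (m + r))}
    (hIc : ¬ lastRows m r ⊆ I) : ¬ lastRows m r ⊆ I.erase x := fun h =>
  hIc (h.trans (Finset.erase_subset x I))

end Helpers

open SM in
/-- Every element `S` of `S1 ∪ S2 ∪ S3 ∪ S4` falls into exactly one of the
following mutually exclusive cases:
(i) `S` is supported only on basis vectors `E_{I,J}` with `{m+1,…,m+r} ⊆ I`;
(ii) `S` is supported only on basis vectors `E_{I,J}` with `{m+1,…,m+r} ⊄ I`;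
(iii) neither (i) nor (ii) holds, and some coefficient of `S` at a basis vector `E_{I,J}` with
`{m+1,…,m+r} ⊄ I` involves a `c`-variable (does not lie in the subring generated by the
`y`-variables). -/
theorem stmt_6 (𝕂 : Type*) [Field 𝕂] (m r n : ℕ) (hm : 0 < m) (hr : 0 < r) (hrn : r ≤ n)
    (T : FreeMod (MvPolynomial (Vars m r n) 𝕂) (m + r) n)
    (hT : T ∈ S1Set r (Dmat 𝕂 m r n) ∪ S2Set r (Dmat 𝕂 m r n) ∪ S3Set r (Dmat 𝕂 m r n) ∪
        S4Set r (Dmat 𝕂 m r n)) :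
    ((∀ p, T p ≠ 0 → lastRows m r ⊆ p.1) ∧ ¬ (∀ p, T p ≠ 0 → ¬ lastRows m r ⊆ p.1)) ∨
    ((∀ p, T p ≠ 0 → ¬ lastRows m r ⊆ p.1) ∧ ¬ (∀ p, T p ≠ 0 → lastRows m r ⊆ p.1)) ∨
    (¬ (∀ p, T p ≠ 0 → lastRows m r ⊆ p.1) ∧ ¬ (∀ p, T p ≠ 0 → ¬ lastRows m r ⊆ p.1) ∧
      ∃ p : Finset (Fin (m + r)) × Finset (Fin n), ¬ lastRows m r ⊆ p.1 ∧
        T p ∉ MvPolynomial.supported 𝕂 (Set.range Sum.inl)) := by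
  classical
  rcases hT with ((hT | hT) | hT) | hT
  · -- Case S1
    obtain ⟨I, J, hIc1, hJ, i, hiI, rfl⟩ := hT
    have happly : ∀ p, s1El r (Dmat 𝕂 m r n) i I J hJ p =
        ∑ t : Fin (r + 2), if p = (I, J.erase (J.orderIsoOfFin hJ t)) then
          (-1 : MvPolynomial (Vars m r n) 𝕂) ^ (t : ℕ) *
            Dmat 𝕂 m r n i (J.orderIsoOfFin hJ t) else 0 := by
      intro p
      simp only [s1El]
      exact sum_smul_eVec_apply _ _ p
    have hposinj : Function.Injective
        (fun t : Fin (r + 2) => ((I, J.erase (J.orderIsoOfFin hJ t)) :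
          Finset (Fin (m + r)) × Finset (Fin n))) := by
      intro t t' e
      simp only [Prod.mk.injEq] at e
      exact erase_iso_eq J hJ e.2
    have hval := (happly (I, J.erase (J.orderIsoOfFin hJ 0))).trans
      (ite_sum_self _ _ hposinj 0)
    have hvne : s1El r (Dmat 𝕂 m r n) i I J hJ (I, J.erase (J.orderIsoOfFin hJ 0)) ≠ 0 := by
      rw [hval]; exact sign_Dmat_ne_zero _ _ _
    have hsupp : ∀ p, s1El r (Dmat 𝕂 m r n) i I J hJ p ≠ 0 → p.1 = I := by
      intro p hp
      by_contra hne
      exact hp ((happly p).trans (ite_sum_zero _ _ (fun t h => hne (congrArg Prod.fst h))))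
    by_cases hIc : lastRows m r ⊆ I
    · left
      refine ⟨fun p hp => by rw [hsupp p hp]; exact hIc, fun hB => hB _ hvne hIc⟩
    · right; left
      refine ⟨fun p hp => by rw [hsupp p hp]; exact hIc, fun hA => hIc (hA _ hvne)⟩
  · -- Case S2
    obtain ⟨I, J, hI, hJc1, j, hjJ, rfl⟩ := hT
    have happly : ∀ p, s2El r (Dmat 𝕂 m r n) j I J hI p =
        ∑ s : Fin (r + 2), if p = (I.erase (I.orderIsoOfFin hI s), J) then
          (-1 : MvPolynomial (Vars m r n) 𝕂) ^ (s : ℕ) *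
            Dmat 𝕂 m r n (I.orderIsoOfFin hI s) j else 0 := by
      intro p
      simp only [s2El]
      exact sum_smul_eVec_apply _ _ p
    have hposinj : Function.Injective
        (fun s : Fin (r + 2) => ((I.erase (I.orderIsoOfFin hI s), J) :
          Finset (Fin (m + r)) × Finset (Fin n))) := by
      intro s s' e
      simp only [Prod.mk.injEq] at e
      exact erase_iso_eq I hI e.1
    have hval0 := (happly (I.erase (I.orderIsoOfFin hI 0), J)).trans
      (ite_sum_self _ _ hposinj 0)
    have hv0ne : s2El r (Dmat 𝕂 m r n) j I J hI (I.erase (I.orderIsoOfFin hI 0), J) ≠ 0 := by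
      rw [hval0]; exact sign_Dmat_ne_zero _ _ _
    have hsupp : ∀ p, s2El r (Dmat 𝕂 m r n) j I J hI p ≠ 0 →
        ∃ s : Fin (r + 2), p.1 = I.erase (I.orderIsoOfFin hI s) := by
      intro p hp
      by_contra hne
      push_neg at hne
      exact hp ((happly p).trans (ite_sum_zero _ _ (fun s h => hne s (congrArg Prod.fst h))))
    by_cases hIc : lastRows m r ⊆ I
    · obtain ⟨s, hs0, hsge⟩ := exists_iso_ge hr I hI hIc
      have hvals := (happly (I.erase (I.orderIsoOfFin hI s), J)).trans
        (ite_sum_self _ _ hposinj s)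
      have hvsne : s2El r (Dmat 𝕂 m r n) j I J hI (I.erase (I.orderIsoOfFin hI s), J) ≠ 0 := by
        rw [hvals]; exact sign_Dmat_ne_zero _ _ _
      have h0lt := iso_zero_lt I hI
      right; right
      refine ⟨?_, ?_, ⟨(I.erase (I.orderIsoOfFin hI s), J),
        not_subset_erase_of_mem hsge I, ?_⟩⟩
      · intro hA
        exact not_subset_erase_of_mem hsge I (hA _ hvsne)
      · intro hB
        exact hB _ hv0ne (subset_erase_of hIc h0lt)
      · rw [hvals]
        exact sign_Dmat_not_supported hsge j _
    · right; left
      refine ⟨?_, ?_⟩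
      · intro p hp
        obtain ⟨s, hps⟩ := hsupp p hp
        rw [hps]
        exact not_subset_of_erase hIc
      · intro hA
        exact not_subset_of_erase hIc (hA _ hv0ne)
  · -- Case S3
    obtain ⟨I, J, hI, hJ, h, hh1, rfl⟩ := hT
    have hrApply : ∀ (p₀ : Fin (r + 2)) p, rowExp r (Dmat 𝕂 m r n) I J hI hJ p₀ p =
        ∑ t : Fin (r + 2), if p = (I.erase (I.orderIsoOfFin hI p₀),
            J.erase (J.orderIsoOfFin hJ t)) then
          (-1 : MvPolynomial (Vars m r n) 𝕂) ^ ((p₀ : ℕ) + (t : ℕ)) *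
            Dmat 𝕂 m r n (I.orderIsoOfFin hI p₀) (J.orderIsoOfFin hJ t) else 0 := by
      intro p₀ p
      simp only [rowExp]
      exact sum_smul_eVec_apply _ _ p
    have hposinj : ∀ p₀ : Fin (r + 2), Function.Injective
        (fun t : Fin (r + 2) => ((I.erase (I.orderIsoOfFin hI p₀),
          J.erase (J.orderIsoOfFin hJ t)) : Finset (Fin (m + r)) × Finset (Fin n))) := by
      intro p₀ t t' e
      simp only [Prod.mk.injEq] at e
      exact erase_iso_eq J hJ e.2
    have hne0 : h ≠ 0 := by
      intro e
      rw [e] at hh1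
      simp at hh1
    have hIne : I.erase (I.orderIsoOfFin hI 0) ≠ I.erase (I.orderIsoOfFin hI h) :=
      fun e => hne0 ((erase_iso_eq I hI e).symm)
    have hT0 : ∀ t : Fin (r + 2),
        (rowExp r (Dmat 𝕂 m r n) I J hI hJ 0 - rowExp r (Dmat 𝕂 m r n) I J hI hJ h)
          (I.erase (I.orderIsoOfFin hI 0), J.erase (J.orderIsoOfFin hJ t)) =
        (-1 : MvPolynomial (Vars m r n) 𝕂) ^ (((0 : Fin (r + 2)) : ℕ) + (t : ℕ)) *
          Dmat 𝕂 m r n (I.orderIsoOfFin hI 0) (J.orderIsoOfFin hJ t) := by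
      intro t
      have A1 := (hrApply 0 (I.erase (I.orderIsoOfFin hI 0),
        J.erase (J.orderIsoOfFin hJ t))).trans (ite_sum_self _ _ (hposinj 0) t)
      have A2 : rowExp r (Dmat 𝕂 m r n) I J hI hJ h
          (I.erase (I.orderIsoOfFin hI 0), J.erase (J.orderIsoOfFin hJ t)) = 0 :=
        (hrApply h _).trans (ite_sum_zero _ _ (fun t' e => hIne (congrArg Prod.fst e)))
      rw [Pi.sub_apply, A1, A2, sub_zero]
    have hTh : ∀ t : Fin (r + 2),
        (rowExp r (Dmat 𝕂 m r n) I J hI hJ 0 - rowExp r (Dmat 𝕂 m r n) I J hI hJ h)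
          (I.erase (I.orderIsoOfFin hI h), J.erase (J.orderIsoOfFin hJ t)) =
        -((-1 : MvPolynomial (Vars m r n) 𝕂) ^ ((h : ℕ) + (t : ℕ)) *
          Dmat 𝕂 m r n (I.orderIsoOfFin hI h) (J.orderIsoOfFin hJ t)) := by
      intro t
      have A1 := (hrApply h (I.erase (I.orderIsoOfFin hI h),
        J.erase (J.orderIsoOfFin hJ t))).trans (ite_sum_self _ _ (hposinj h) t)
      have A2 : rowExp r (Dmat 𝕂 m r n) I J hI hJ 0
          (I.erase (I.orderIsoOfFin hI h), J.erase (J.orderIsoOfFin hJ t)) = 0 :=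
        (hrApply 0 _).trans (ite_sum_zero _ _ (fun t' e => hIne (congrArg Prod.fst e).symm))
      rw [Pi.sub_apply, A1, A2, zero_sub]
    have hsupp : ∀ p,
        (rowExp r (Dmat 𝕂 m r n) I J hI hJ 0 - rowExp r (Dmat 𝕂 m r n) I J hI hJ h) p ≠ 0 →
        p.1 = I.erase (I.orderIsoOfFin hI 0) ∨ p.1 = I.erase (I.orderIsoOfFin hI h) := by
      intro p hp
      by_contra hc
      push_neg at hc
      apply hp
      have A1 : rowExp r (Dmat 𝕂 m r n) I J hI hJ 0 p = 0 :=
        (hrApply 0 p).trans (ite_sum_zero _ _ (fun t e => hc.1 (congrArg Prod.fst e)))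
      have A2 : rowExp r (Dmat 𝕂 m r n) I J hI hJ h p = 0 :=
        (hrApply h p).trans (ite_sum_zero _ _ (fun t e => hc.2 (congrArg Prod.fst e)))
      rw [Pi.sub_apply, A1, A2, sub_zero]
    have hT0ne : (rowExp r (Dmat 𝕂 m r n) I J hI hJ 0 - rowExp r (Dmat 𝕂 m r n) I J hI hJ h)
        (I.erase (I.orderIsoOfFin hI 0), J.erase (J.orderIsoOfFin hJ 0)) ≠ 0 := by
      rw [hT0 0]; exact sign_Dmat_ne_zero _ _ _
    by_cases hIc : lastRows m r ⊆ I
    · have h0lt := iso_zero_lt I hI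
      by_cases hhm : m ≤ ((I.orderIsoOfFin hI h : Fin (m + r)) : ℕ)
      · right; right
        have hThne : (rowExp r (Dmat 𝕂 m r n) I J hI hJ 0 -
            rowExp r (Dmat 𝕂 m r n) I J hI hJ h)
            (I.erase (I.orderIsoOfFin hI h), J.erase (J.orderIsoOfFin hJ 0)) ≠ 0 := by
          rw [hTh 0]; exact neg_ne_zero.mpr (sign_Dmat_ne_zero _ _ _)
        refine ⟨?_, ?_, ⟨(I.erase (I.orderIsoOfFin hI h), J.erase (J.orderIsoOfFin hJ 0)),
          not_subset_erase_of_mem hhm I, ?_⟩⟩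
        · intro hA
          exact not_subset_erase_of_mem hhm I (hA _ hThne)
        · intro hB
          exact hB _ hT0ne (subset_erase_of hIc h0lt)
        · rw [hTh 0]
          intro hmem
          rw [neg_mem_iff] at hmem
          exact sign_Dmat_not_supported hhm _ _ hmem
      · push_neg at hhm
        left
        refine ⟨?_, fun hB => hB _ hT0ne (subset_erase_of hIc h0lt)⟩
        intro p hp
        rcases hsupp p hp with e | e <;> rw [e]
        · exact subset_erase_of hIc h0lt
        · exact subset_erase_of hIc hhm
    · right; left
      refine ⟨?_, fun hA => not_subset_of_erase hIc (hA _ hT0ne)⟩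
      intro p hp
      rcases hsupp p hp with e | e <;> rw [e] <;> exact not_subset_of_erase hIc
  · -- Case S4
    obtain ⟨I, J, hI, hJ, q, hq1, rfl⟩ := hT
    have hrApply : ∀ p, rowExp r (Dmat 𝕂 m r n) I J hI hJ 0 p =
        ∑ t : Fin (r + 2), if p = (I.erase (I.orderIsoOfFin hI 0),
            J.erase (J.orderIsoOfFin hJ t)) then
          (-1 : MvPolynomial (Vars m r n) 𝕂) ^ (((0 : Fin (r + 2)) : ℕ) + (t : ℕ)) *
            Dmat 𝕂 m r n (I.orderIsoOfFin hI 0) (J.orderIsoOfFin hJ t) else 0 := by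
      intro p
      simp only [rowExp]
      exact sum_smul_eVec_apply _ _ p
    have hcApply : ∀ p, colExp r (Dmat 𝕂 m r n) I J hI hJ q p =
        ∑ s : Fin (r + 2), if p = (I.erase (I.orderIsoOfFin hI s),
            J.erase (J.orderIsoOfFin hJ q)) then
          (-1 : MvPolynomial (Vars m r n) 𝕂) ^ ((s : ℕ) + (q : ℕ)) *
            Dmat 𝕂 m r n (I.orderIsoOfFin hI s) (J.orderIsoOfFin hJ q) else 0 := by
      intro p
      simp only [colExp]
      exact sum_smul_eVec_apply _ _ p
    have hrposinj : Function.Injective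
        (fun t : Fin (r + 2) => ((I.erase (I.orderIsoOfFin hI 0),
          J.erase (J.orderIsoOfFin hJ t)) : Finset (Fin (m + r)) × Finset (Fin n))) := by
      intro t t' e
      simp only [Prod.mk.injEq] at e
      exact erase_iso_eq J hJ e.2
    have hcposinj : Function.Injective
        (fun s : Fin (r + 2) => ((I.erase (I.orderIsoOfFin hI s),
          J.erase (J.orderIsoOfFin hJ q)) : Finset (Fin (m + r)) × Finset (Fin n))) := by
      intro s s' e
      simp only [Prod.mk.injEq] at e
      exact erase_iso_eq I hI e.1
    have hq0 : q ≠ 0 := by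
      intro e
      rw [e] at hq1
      simp at hq1
    have hJne : J.erase (J.orderIsoOfFin hJ 0) ≠ J.erase (J.orderIsoOfFin hJ q) :=
      fun e => hq0 ((erase_iso_eq J hJ e).symm)
    have hT00 : (rowExp r (Dmat 𝕂 m r n) I J hI hJ 0 - colExp r (Dmat 𝕂 m r n) I J hI hJ q)
        (I.erase (I.orderIsoOfFin hI 0), J.erase (J.orderIsoOfFin hJ 0)) =
        (-1 : MvPolynomial (Vars m r n) 𝕂) ^ (((0 : Fin (r + 2)) : ℕ) + ((0 : Fin (r + 2)) : ℕ)) *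
          Dmat 𝕂 m r n (I.orderIsoOfFin hI 0) (J.orderIsoOfFin hJ 0) := by
      have A1 := (hrApply (I.erase (I.orderIsoOfFin hI 0),
        J.erase (J.orderIsoOfFin hJ 0))).trans (ite_sum_self _ _ hrposinj 0)
      have A2 : colExp r (Dmat 𝕂 m r n) I J hI hJ q
          (I.erase (I.orderIsoOfFin hI 0), J.erase (J.orderIsoOfFin hJ 0)) = 0 :=
        (hcApply _).trans (ite_sum_zero _ _ (fun s e => hJne (congrArg Prod.snd e)))
      rw [Pi.sub_apply, A1, A2, sub_zero]
    have hT00ne : (rowExp r (Dmat 𝕂 m r n) I J hI hJ 0 - colExp r (Dmat 𝕂 m r n) I J hI hJ q)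
        (I.erase (I.orderIsoOfFin hI 0), J.erase (J.orderIsoOfFin hJ 0)) ≠ 0 := by
      rw [hT00]; exact sign_Dmat_ne_zero _ _ _
    have hsupp : ∀ p,
        (rowExp r (Dmat 𝕂 m r n) I J hI hJ 0 - colExp r (Dmat 𝕂 m r n) I J hI hJ q) p ≠ 0 →
        ∃ s : Fin (r + 2), p.1 = I.erase (I.orderIsoOfFin hI s) := by
      intro p hp
      by_contra hc
      push_neg at hc
      apply hp
      have A1 : rowExp r (Dmat 𝕂 m r n) I J hI hJ 0 p = 0 :=
        (hrApply p).trans (ite_sum_zero _ _ (fun t e => hc 0 (congrArg Prod.fst e)))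
      have A2 : colExp r (Dmat 𝕂 m r n) I J hI hJ q p = 0 :=
        (hcApply p).trans (ite_sum_zero _ _ (fun s e => hc s (congrArg Prod.fst e)))
      rw [Pi.sub_apply, A1, A2, sub_zero]
    by_cases hIc : lastRows m r ⊆ I
    · obtain ⟨s, hs0, hsge⟩ := exists_iso_ge hr I hI hIc
      have h0lt := iso_zero_lt I hI
      have hIne : I.erase (I.orderIsoOfFin hI s) ≠ I.erase (I.orderIsoOfFin hI 0) :=
        fun e => hs0 (erase_iso_eq I hI e)
      have hTs : (rowExp r (Dmat 𝕂 m r n) I J hI hJ 0 - colExp r (Dmat 𝕂 m r n) I J hI hJ q)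
          (I.erase (I.orderIsoOfFin hI s), J.erase (J.orderIsoOfFin hJ q)) =
          -((-1 : MvPolynomial (Vars m r n) 𝕂) ^ ((s : ℕ) + (q : ℕ)) *
            Dmat 𝕂 m r n (I.orderIsoOfFin hI s) (J.orderIsoOfFin hJ q)) := by
        have A1 := (hcApply (I.erase (I.orderIsoOfFin hI s),
          J.erase (J.orderIsoOfFin hJ q))).trans (ite_sum_self _ _ hcposinj s)
        have A2 : rowExp r (Dmat 𝕂 m r n) I J hI hJ 0
            (I.erase (I.orderIsoOfFin hI s), J.erase (J.orderIsoOfFin hJ q)) = 0 :=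
          (hrApply _).trans (ite_sum_zero _ _ (fun t e => hIne (congrArg Prod.fst e)))
        rw [Pi.sub_apply, A1, A2, zero_sub]
      have hTsne : (rowExp r (Dmat 𝕂 m r n) I J hI hJ 0 - colExp r (Dmat 𝕂 m r n) I J hI hJ q)
          (I.erase (I.orderIsoOfFin hI s), J.erase (J.orderIsoOfFin hJ q)) ≠ 0 := by
        rw [hTs]; exact neg_ne_zero.mpr (sign_Dmat_ne_zero _ _ _)
      right; right
      refine ⟨?_, ?_, ⟨(I.erase (I.orderIsoOfFin hI s), J.erase (J.orderIsoOfFin hJ q)),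
        not_subset_erase_of_mem hsge I, ?_⟩⟩
      · intro hA
        exact not_subset_erase_of_mem hsge I (hA _ hTsne)
      · intro hB
        exact hB _ hT00ne (subset_erase_of hIc h0lt)
      · rw [hTs]
        intro hmem
        rw [neg_mem_iff] at hmem
        exact sign_Dmat_not_supported hsge _ _ hmem
    · right; left
      refine ⟨?_, fun hA => not_subset_of_erase hIc (hA _ hT00ne)⟩
      intro p hp
      obtain ⟨s, hps⟩ := hsupp p hp
      rw [hps]
      exact not_subset_of_erase hIc
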